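/- Let f, g : [0,1) → ℝ be decreasing integrable functions with ∫₀¹ f = ∫₀¹ g and ∫₀ˢ f(t) dt ≤ ∫₀ˢ g(t) dt for all s ∈ [0,1). Fix n and partition [0,1] into 2ⁿ dyadic intervals I_i of length 2⁻ⁿ; set α_i = 2ⁿ ∫_{I_i} f and β_i = 2ⁿ ∫_{I_i} g. Then the vectors α = (α_1,…,α_{2ⁿ}) and β = (β_1,…,β_{2ⁿ}) have decreasing entries and α ≺ β in ℝ^{2ⁿ}. -/

import Mathlib

open MeasureTheory

/-- The sum of the `k` largest entries of `α`. -/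
noncomputable def kLargestSum {n : ℕ} (α : Fin n → ℝ) (k : ℕ) : ℝ :=
  sSup {x : ℝ | ∃ s : Finset (Fin n), s.card = k ∧ x = ∑ i ∈ s, α i}

/-- Vector majorization `α ≺ β`. -/
def IsMajorizedBy {n : ℕ} (α β : Fin n → ℝ) : Prop :=
  (∀ k : ℕ, k ≤ n → kLargestSum α k ≤ kLargestSum β k) ∧ ∑ i, α i = ∑ i, β i

/-- Integrability on subintervals of `[0,1)`. -/
lemma subIntegrable (f : ℝ → ℝ) (hfi : IntegrableOn f (Set.Ico 0 1)) {a b : ℝ}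
    (ha : 0 ≤ a) (hb : b ≤ 1) (hab : a ≤ b) : IntervalIntegrable f volume a b := by
  rw [intervalIntegrable_iff_integrableOn_Ioc_of_le hab,
    integrableOn_Ioc_iff_integrableOn_Ioo]
  exact hfi.mono_set (fun x hx => ⟨le_of_lt (lt_of_le_of_lt ha hx.1),
    lt_of_lt_of_le hx.2 hb⟩)

/-- One-step monotonicity of averages. -/
lemma step_mono (f : ℝ → ℝ) (hf : AntitoneOn f (Set.Ico 0 1))
    (hfi : IntegrableOn f (Set.Ico 0 1)) {a h : ℝ} (hh : 0 < h) (ha : 0 ≤ a)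
    (hab : a + h + h ≤ 1) :
    ∫ t in (a+h)..(a+h+h), f t ≤ ∫ t in a..(a+h), f t := by
  have key : ∫ t in (a+h)..(a+h+h), f t = ∫ t in a..(a+h), f (t + h) := by
    rw [intervalIntegral.integral_comp_add_right]
  rw [key]
  have h1 : IntervalIntegrable (fun t => f (t+h)) volume a (a+h) := by
    have := (subIntegrable f hfi (by linarith : (0:ℝ) ≤ a+h) hab (by linarith) :
      IntervalIntegrable f volume (a+h) (a+h+h)).comp_add_right h
    simpa using this
  have h2 : IntervalIntegrable f volume a (a+h) :=
    subIntegrable f hfi ha (by linarith) (by linarith)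
  apply intervalIntegral.integral_mono_ae_restrict (by linarith) h1 h2
  have hne : ∀ᵐ x ∂((volume : Measure ℝ).restrict (Set.Icc a (a+h))), x ≠ a+h := by
    apply ae_restrict_of_ae
    rw [ae_iff]
    have hset : {x : ℝ | ¬ x ≠ a+h} = {a+h} := by ext x; simp
    rw [hset]
    exact measure_singleton _
  filter_upwards [hne, ae_restrict_mem measurableSet_Icc] with x hxne hmem
  have hxlt : x < a + h := lt_of_le_of_ne hmem.2 hxne
  have hx1 : x ∈ Set.Ico (0:ℝ) 1 := ⟨by linarith [hmem.1], by linarith⟩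
  have hx2 : x + h ∈ Set.Ico (0:ℝ) 1 := ⟨by linarith [hmem.1], by linarith⟩
  exact hf hx1 hx2 (by linarith)

/-- For a strictly monotone map between `Fin`s, `j ≤ φ j`. -/
lemma fin_le_strictMono {k N : ℕ} {φ : Fin k → Fin N} (h : StrictMono φ) (j : Fin k) :
    (j : ℕ) ≤ (φ j : ℕ) := by
  induction' hm : (j : ℕ) with m ih generalizing j
  · omega
  · have hj' : m < k := by omega
    have h1 := ih ⟨m, hj'⟩ rfl
    have hlt : (⟨m, hj'⟩ : Fin k) < j := by rw [Fin.lt_def]; simp [hm]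
    have h2 : (φ ⟨m, hj'⟩ : ℕ) < (φ j : ℕ) := h hlt
    omega

/-- For antitone `α`, the largest sum over `k`-subsets is the sum of the first `k`. -/
lemma kLargestSum_antitone {N : ℕ} (α : Fin N → ℝ) (hα : Antitone α) {k : ℕ}
    (hk : k ≤ N) :
    kLargestSum α k = ∑ j : Fin k, α (Fin.castLE hk j) := by
  apply IsGreatest.csSup_eq
  constructor
  · refine ⟨(Finset.univ : Finset (Fin k)).map (Fin.castLEEmb hk), ?_, ?_⟩
    · simp
    · rw [Finset.sum_map]; rfl
  · rintro x ⟨s, hs, rfl⟩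
    have key : ∑ i ∈ s, α i = ∑ j : Fin k, α ((s.orderIsoOfFin hs j : Fin N)) := by
      rw [← Finset.sum_coe_sort s]
      exact (Equiv.sum_comp (s.orderIsoOfFin hs).toEquiv (fun x => α (x : Fin N))).symm
    rw [key]
    apply Finset.sum_le_sum
    intro j _
    apply hα
    have hm : StrictMono (fun j : Fin k => ((s.orderIsoOfFin hs j : Fin N))) :=
      fun a b hab => (s.orderIsoOfFin hs).strictMono hab
    have := fin_le_strictMono hm j
    exact Fin.le_def.mpr (le_trans (by simp [Fin.castLE]) this)

/-- Dyadic discretization preserves majorization: if `f, g` are decreasing integrable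
functions on `[0,1)` with `∫₀¹ f = ∫₀¹ g` and `∫₀ˢ f ≤ ∫₀ˢ g` for all `s ∈ [0,1)`, then
the vectors of averages of `f` and `g` over the dyadic intervals of level `n` have
decreasing entries and are majorized accordingly. -/
theorem dyadic_discretization_majorization
    (f g : ℝ → ℝ) (hf : AntitoneOn f (Set.Ico 0 1)) (hg : AntitoneOn g (Set.Ico 0 1))
    (hfi : IntegrableOn f (Set.Ico 0 1)) (hgi : IntegrableOn g (Set.Ico 0 1))
    (htot : ∫ t in Set.Ico (0:ℝ) 1, f t = ∫ t in Set.Ico (0:ℝ) 1, g t)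
    (hpart : ∀ s ∈ Set.Ico (0:ℝ) 1, ∫ t in (0:ℝ)..s, f t ≤ ∫ t in (0:ℝ)..s, g t)
    (n : ℕ)
    (α β : Fin (2 ^ n) → ℝ)
    (hα : ∀ i, α i = 2 ^ n * ∫ t in ((i : ℝ) / 2 ^ n)..(((i : ℝ) + 1) / 2 ^ n), f t)
    (hβ : ∀ i, β i = 2 ^ n * ∫ t in ((i : ℝ) / 2 ^ n)..(((i : ℝ) + 1) / 2 ^ n), g t) :
    Antitone α ∧ Antitone β ∧ IsMajorizedBy α β := by
  have hN : (0:ℝ) < 2 ^ n := by positivity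
  have hNn : 0 < 2 ^ n := Nat.pow_pos (by norm_num)
  -- antitone proof for a general function
  have anti : ∀ (F : ℝ → ℝ), AntitoneOn F (Set.Ico 0 1) → IntegrableOn F (Set.Ico 0 1) →
      ∀ (γ : Fin (2^n) → ℝ),
      (∀ i, γ i = 2 ^ n * ∫ t in ((i : ℝ) / 2 ^ n)..(((i : ℝ) + 1) / 2 ^ n), F t) →
      Antitone γ := by
    intro F hF hFi γ hγ
    have step : ∀ (i : ℕ) (hi : i + 1 < 2^n),
        γ ⟨i+1, hi⟩ ≤ γ ⟨i, Nat.lt_of_succ_lt hi⟩ := by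
      intro i hi
      rw [hγ, hγ]
      apply mul_le_mul_of_nonneg_left _ (le_of_lt hN)
      have h1 : ((⟨i, Nat.lt_of_succ_lt hi⟩ : Fin (2^n)) : ℝ) = (i : ℝ) := rfl
      have h2 : ((⟨i+1, hi⟩ : Fin (2^n)) : ℝ) = (i : ℝ) + 1 := by
        rw [Fin.val_mk]; push_cast; ring
      rw [h1, h2]
      have hstep := step_mono F hF hFi (a := (i:ℝ)/2^n) (h := 1/2^n)
        (by positivity) (by positivity)
        (by rw [← add_div, ← add_div, div_le_one hN]
            have : ((i:ℕ):ℝ) + 1 + 1 ≤ ((2^n : ℕ) : ℝ) := by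
              exact_mod_cast (by omega : i + 1 + 1 ≤ 2^n)
            push_cast at this ⊢
            linarith)
      calc ∫ t in (((i:ℝ)+1) / 2 ^ n)..((i:ℝ)+1+1) / 2 ^ n, F t
          = ∫ t in ((i:ℝ)/2^n + 1/2^n)..((i:ℝ)/2^n + 1/2^n + 1/2^n), F t := by
            rw [← add_div, ← add_div]
        _ ≤ ∫ t in ((i:ℝ)/2^n)..((i:ℝ)/2^n + 1/2^n), F t := hstep
        _ = ∫ t in ((i:ℝ)/2^n)..(((i:ℝ)+1) / 2 ^ n), F t := by rw [← add_div]
    intro a b hab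
    obtain ⟨a, ha⟩ := a; obtain ⟨b, hb⟩ := b
    simp only [Fin.mk_le_mk] at hab
    induction b with
    | zero => interval_cases a; exact le_refl _
    | succ m ih =>
      rcases Nat.lt_or_ge a (m+1) with hlt | hge
      · calc γ ⟨m+1, hb⟩ ≤ γ ⟨m, Nat.lt_of_succ_lt hb⟩ := step m hb
          _ ≤ γ ⟨a, ha⟩ := ih (Nat.lt_of_succ_lt hb) (by omega)
      · have : a = m + 1 := by omega
        subst this
        exact le_refl _
  -- partial sum identity
  have partial_sum : ∀ (F : ℝ → ℝ), IntegrableOn F (Set.Ico 0 1) →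
      ∀ (γ : Fin (2^n) → ℝ),
      (∀ i, γ i = 2 ^ n * ∫ t in ((i : ℝ) / 2 ^ n)..(((i : ℝ) + 1) / 2 ^ n), F t) →
      ∀ k (hk : k ≤ 2^n),
      ∑ j : Fin k, γ (Fin.castLE hk j) = 2^n * ∫ t in (0:ℝ)..((k:ℝ)/2^n), F t := by
    intro F hFi γ hγ k hk
    have key : ∑ j ∈ Finset.range k, ∫ t in ((j:ℝ)/2^n)..(((j:ℝ)+1)/2^n), F t
        = ∫ t in (0:ℝ)..((k:ℝ)/2^n), F t := by
      have hadj := intervalIntegral.sum_integral_adjacent_intervals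
        (a := fun j : ℕ => (j:ℝ)/2^n) (μ := volume) (f := F) (n := k) ?_
      · rw [← intervalIntegral.integral_congr (g := F) (fun x _ => rfl)] at hadj
        have h0 : ((0:ℕ):ℝ)/2^n = (0:ℝ) := by norm_num
        rw [h0] at hadj
        rw [← hadj]
        apply Finset.sum_congr rfl
        intro j _
        have : (((j+1 : ℕ)):ℝ) = (j:ℝ)+1 := by push_cast; ring
        rw [this]
      · intro j hj
        apply subIntegrable F hFi (by positivity)
        · rw [div_le_one hN]
          exact_mod_cast (by omega : j + 1 ≤ 2^n)
        · refine (div_le_div_iff_of_pos_right hN).mpr ?_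
          push_cast
          linarith
    have hone : ∀ i : Fin (2^n), ((i:ℕ):ℝ) + 1 = (((i:ℕ)+1 : ℕ):ℝ) := by
      intro i; push_cast; ring
    calc ∑ j : Fin k, γ (Fin.castLE hk j)
        = ∑ j : Fin k, (2^n * ∫ t in ((((j:ℕ)):ℝ)/2^n)..(((((j:ℕ)):ℝ)+1)/2^n), F t) := by
          apply Finset.sum_congr rfl
          intro j _
          rw [hγ]
          rfl
      _ = ∑ j ∈ Finset.range k, (2^n * ∫ t in ((j:ℝ)/2^n)..(((j:ℝ)+1)/2^n), F t) :=
          Fin.sum_univ_eq_sum_range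
            (fun j : ℕ => 2^n * ∫ t in ((j:ℝ)/2^n)..(((j:ℝ)+1)/2^n), F t) k
      _ = 2^n * ∑ j ∈ Finset.range k, ∫ t in ((j:ℝ)/2^n)..(((j:ℝ)+1)/2^n), F t := by
          rw [Finset.mul_sum]
      _ = 2^n * ∫ t in (0:ℝ)..((k:ℝ)/2^n), F t := by rw [key]
  -- interval-integral version of the total-mass equality
  have htot' : ∫ t in (0:ℝ)..1, f t = ∫ t in (0:ℝ)..1, g t := by
    rw [intervalIntegral.integral_of_le (by norm_num : (0:ℝ) ≤ 1),
      intervalIntegral.integral_of_le (by norm_num : (0:ℝ) ≤ 1),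
      integral_Ioc_eq_integral_Ioo, integral_Ioc_eq_integral_Ioo,
      ← integral_Ico_eq_integral_Ioo, ← integral_Ico_eq_integral_Ioo]
    exact htot
  have hαa : Antitone α := anti f hf hfi α hα
  have hβa : Antitone β := anti g hg hgi β hβ
  refine ⟨hαa, hβa, ?_, ?_⟩
  · intro k hk
    rw [show kLargestSum α k = _ from kLargestSum_antitone α hαa hk,
      show kLargestSum β k = _ from kLargestSum_antitone β hβa hk,
      partial_sum f hfi α hα k hk, partial_sum g hgi β hβ k hk]
    apply mul_le_mul_of_nonneg_left _ (le_of_lt hN)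
    rcases eq_or_lt_of_le hk with heq | hlt
    · have h1 : ((k:ℕ):ℝ)/2^n = 1 := by
        rw [div_eq_one_iff_eq (ne_of_gt hN), heq]; push_cast; ring
      rw [h1]
      exact le_of_eq htot'
    · apply hpart
      constructor
      · positivity
      · rw [div_lt_one hN]
        exact_mod_cast hlt
  · have h1 := partial_sum f hfi α hα (2^n) le_rfl
    have h2 := partial_sum g hgi β hβ (2^n) le_rfl
    have hone : ((2^n : ℕ) : ℝ)/2^n = 1 := by
      rw [div_eq_one_iff_eq (ne_of_gt hN)]; push_cast; ring
    rw [hone] at h1 h2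
    have hcast : ∀ (γ : Fin (2^n) → ℝ),
        ∑ j : Fin (2^n), γ (Fin.castLE le_rfl j) = ∑ i, γ i :=
      fun γ => Finset.sum_congr rfl (fun j _ => rfl)
    rw [hcast α] at h1
    rw [hcast β] at h2
    rw [h1, h2, htot']
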